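/- Let p, q be integers with 1 ≤ q ≤ p, let γ be the largest root of x² − px − q, and let G_0 = 1, G_1 = p+1, G_m = p·G_{m−1} + q·G_{m−2}. Then for all integers m ≥ k ≥ 0: |G_{m−k}/G_m − γ^(−k)| < 1/G_m, and the minimum over 0 ≤ i ≤ m of |G_{m−i}/G_m − γ^(−k)| is attained at i = k, i.e. min_{0≤i≤m} |G_{m−i}/G_m − 1/γ^k| = |G_{m−k}/G_m − 1/γ^k|. -/

import Mathlib

open Finset

/-- `γ = (p + √(p² + 4q))/2`, the largest root of `x² − px − q`. -/
noncomputable def gam (p q : ℕ) : ℝ := ((p : ℝ) + Real.sqrt ((p : ℝ) ^ 2 + 4 * q)) / 2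

/-- Condition `R_{p,q}` on the base-`(p+1)` digit expansion of `n`: whenever a digit
equals `p`, the digit immediately to its right is strictly less than `q`. -/
def CondR (p q n : ℕ) : Prop :=
  ∀ j : ℕ, (Nat.digits (p + 1) n).getD (j + 1) 0 = p →
    (Nat.digits (p + 1) n).getD j 0 < q

/-- `n‾ = ∑_j d_j γ^j ∈ ℝ`, where `n = (d_{m−1} … d_1 d_0)_{p+1}`. -/
noncomputable def gbar (p q n : ℕ) : ℝ :=
  ∑ j ∈ Finset.range (Nat.digits (p + 1) n).length,
    ((Nat.digits (p + 1) n).getD j 0 : ℝ) * gam p q ^ j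

/-- `G_0 = 1`, `G_1 = p + 1`, `G_m = p·G_{m−1} + q·G_{m−2}`. -/
def G (p q : ℕ) : ℕ → ℕ
  | 0 => 1
  | 1 => p + 1
  | (m + 2) => p * G p q (m + 1) + q * G p q m

/-- Binet's formula for `G`. -/
lemma binet_G (p q : ℕ) (hq : 1 ≤ q) (n : ℕ) :
    (G p q n : ℝ) =
      (1 + gam p q) / Real.sqrt ((p:ℝ)^2 + 4*q) * gam p q ^ n
        - (1 + ((p:ℝ) - gam p q)) / Real.sqrt ((p:ℝ)^2 + 4*q) * ((p:ℝ) - gam p q) ^ n := by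
  have hq1 : (1:ℝ) ≤ q := by exact_mod_cast hq
  have hs2 : Real.sqrt ((p:ℝ)^2+4*q) ^ 2 = (p:ℝ)^2+4*(q:ℝ) := Real.sq_sqrt (by positivity)
  have hspos : 0 < Real.sqrt ((p:ℝ)^2+4*q) := by
    have h := Real.sqrt_nonneg ((p:ℝ)^2+4*(q:ℝ)); nlinarith
  have hsne : Real.sqrt ((p:ℝ)^2+4*q) ≠ 0 := ne_of_gt hspos
  have hγ2 : gam p q ^ 2 = p * gam p q + q := by
    simp only [gam]; linear_combination hs2/4
  have hδ2 : ((p:ℝ) - gam p q) ^ 2 = p * ((p:ℝ) - gam p q) + q := by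
    simp only [gam]; linear_combination hs2/4
  induction n using Nat.twoStepInduction with
  | zero =>
    simp only [G, Nat.cast_one, pow_zero, mul_one, gam]
    field_simp
    ring
  | one =>
    simp only [G, Nat.cast_add, Nat.cast_one, pow_one, gam]
    field_simp
    ring
  | more n ih1 ih2 =>
    simp only [G, Nat.cast_add, Nat.cast_mul]
    rw [ih1, ih2]
    linear_combination (-( (1+gam p q)/Real.sqrt ((p:ℝ)^2+4*q) * gam p q ^n)) * hγ2
      + ((1+((p:ℝ) - gam p q))/Real.sqrt ((p:ℝ)^2+4*q) * ((p:ℝ) - gam p q)^n) * hδ2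

/-- The key estimate: `|G_{m−k} − G_m·γ^{−k}| < 1/2`. -/
lemma key_G (p q : ℕ) (hq : 1 ≤ q) (hpq : q ≤ p) (m k : ℕ) (hkm : k ≤ m) :
    |(G p q (m - k) : ℝ) - (G p q m : ℝ) * gam p q ^ (-(k : ℤ))| < 1/2 := by
  have hq1 : (1:ℝ) ≤ q := by exact_mod_cast hq
  have hp1 : (1:ℝ) ≤ p := by exact_mod_cast hq.trans hpq
  have hqp : (q:ℝ) ≤ p := by exact_mod_cast hpq
  have hs2 : Real.sqrt ((p:ℝ)^2+4*q) ^ 2 = (p:ℝ)^2+4*(q:ℝ) := Real.sq_sqrt (by positivity)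
  have hs0 : 0 ≤ Real.sqrt ((p:ℝ)^2+4*q) := Real.sqrt_nonneg _
  set s : ℝ := Real.sqrt ((p:ℝ)^2+4*q) with hsdef
  set γ : ℝ := gam p q with hγdef
  set δ : ℝ := (p:ℝ) - γ with hδdef
  have hγs : γ = ((p:ℝ) + s)/2 := rfl
  have hsgt : (p:ℝ) < s := by nlinarith
  have hslt : s < (p:ℝ) + 2 := by nlinarith
  have hδ0 : δ < 0 := by rw [hδdef, hγs]; linarith
  have hδ1 : -1 < δ := by rw [hδdef, hγs]; linarith
  have h1γ : 1 < γ := by rw [hγs]; linarith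
  have hspos : 0 < s := by linarith
  have h3s : 2*(p:ℝ) + 4 < 3*s := by nlinarith
  have hz : γ ^ (-(k : ℤ)) = (γ^k)⁻¹ := by rw [zpow_neg, zpow_natCast]
  have hγkpos : 0 < γ^k := pow_pos (by linarith) k
  have hpow : γ^m * (γ^k)⁻¹ = γ^(m-k) := by
    rw [← Nat.sub_add_cancel hkm, pow_add]
    field_simp
    rw [Nat.add_sub_cancel]
  rw [binet_G p q hq (m-k), binet_G p q hq m, hz]
  have hrw : (1 + γ)/s * γ^(m-k) - (1 + δ)/s * δ^(m-k)
      - ((1 + γ)/s * γ^m - (1 + δ)/s * δ^m) * (γ^k)⁻¹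
      = (1 + δ)/s * (δ^m * (γ^k)⁻¹ - δ^(m-k)) := by
    rw [← hpow]; ring
  rw [hrw]
  have hCpos : 0 < (1 + δ)/s := div_pos (by linarith) hspos
  have hδabs : |δ| ≤ 1 := by rw [abs_le]; constructor <;> linarith
  have h1 : |δ^m * (γ^k)⁻¹| ≤ 1 := by
    rw [abs_mul, abs_pow]
    have : |δ|^m ≤ 1 := pow_le_one₀ (abs_nonneg _) hδabs
    have h2 : |(γ^k)⁻¹| ≤ 1 := by
      rw [abs_inv, abs_of_pos hγkpos]
      rw [inv_le_one_iff₀]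
      right; exact one_le_pow₀ (le_of_lt h1γ)
    calc |δ|^m * |(γ^k)⁻¹| ≤ 1 * 1 := by
          exact mul_le_mul this h2 (abs_nonneg _) zero_le_one
      _ = 1 := by ring
  have h2 : |δ^(m-k)| ≤ 1 := by
    rw [abs_pow]; exact pow_le_one₀ (abs_nonneg _) hδabs
  calc |(1 + δ)/s * (δ^m * (γ^k)⁻¹ - δ^(m-k))|
      = (1 + δ)/s * |δ^m * (γ^k)⁻¹ - δ^(m-k)| := by
        rw [abs_mul, abs_of_pos hCpos]
    _ ≤ (1 + δ)/s * 2 := by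
        apply mul_le_mul_of_nonneg_left _ (le_of_lt hCpos)
        calc |δ^m * (γ^k)⁻¹ - δ^(m-k)| ≤ |δ^m * (γ^k)⁻¹| + |δ^(m-k)| := abs_sub _ _
          _ ≤ 2 := by linarith
    _ < 1/2 := by
        rw [div_mul_eq_mul_div, div_lt_div_iff₀ hspos (by norm_num : (0:ℝ) < 2)]
        have : 1 + δ = ((p:ℝ) + 2 - s)/2 := by rw [hδdef, hγs]; ring
        rw [this]; nlinarith

lemma G_pos (p q : ℕ) (hq : 1 ≤ q) : ∀ n, 1 ≤ G p q n := by
  intro n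
  induction n using Nat.twoStepInduction with
  | zero => simp [G]
  | one => simp [G]
  | more n ih1 ih2 =>
    simp only [G]
    calc 1 ≤ q * G p q n := Nat.one_le_iff_ne_zero.mpr (by positivity)
      _ ≤ p * G p q (n+1) + q * G p q n := Nat.le_add_left _ _

lemma G_mono (p q : ℕ) (hq : 1 ≤ q) (hpq : q ≤ p) : StrictMono (G p q) := by
  apply strictMono_nat_of_lt_succ
  intro n
  match n with
  | 0 => simp only [G]; omega
  | (n+1) =>
    have h1 := G_pos p q hq n
    have h2 := G_pos p q hq (n+1)
    have hp : 1 ≤ p := hq.trans hpq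
    show G p q (n+1) < p * G p q (n+1) + q * G p q n
    calc G p q (n+1) < G p q (n+1) + q * G p q n := by
          have : 1 ≤ q * G p q n := Nat.one_le_iff_ne_zero.mpr (by positivity)
          omega
      _ ≤ p * G p q (n+1) + q * G p q n := by
          have : G p q (n+1) ≤ p * G p q (n+1) := Nat.le_mul_of_pos_left _ (by omega)
          omega

/-- For all `m ≥ k ≥ 0` (with `1 ≤ q ≤ p` and `γ` the largest root of
`x² − px − q`): `|G_{m−k}/G_m − γ^(−k)| < 1/G_m`, and the minimum over `0 ≤ i ≤ m` of
`|G_{m−i}/G_m − γ^(−k)|` is attained at `i = k`. -/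
theorem statement19 (p q : ℕ) (hq : 1 ≤ q) (hpq : q ≤ p) (m k : ℕ) (hkm : k ≤ m) :
    |(G p q (m - k) : ℝ) / (G p q m : ℝ) - gam p q ^ (-(k : ℤ))| < 1 / (G p q m : ℝ) ∧
    ∀ i : ℕ, i ≤ m →
      |(G p q (m - k) : ℝ) / (G p q m : ℝ) - gam p q ^ (-(k : ℤ))| ≤
        |(G p q (m - i) : ℝ) / (G p q m : ℝ) - gam p q ^ (-(k : ℤ))| := by
  have hGm1 : 1 ≤ G p q m := G_pos p q hq m
  have hGm : (0:ℝ) < (G p q m : ℝ) := by exact_mod_cast hGm1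
  have hkey := key_G p q hq hpq m k hkm
  have hdiv : ∀ a : ℕ, ((a:ℝ)/(G p q m : ℝ) - gam p q ^ (-(k:ℤ)))
      = ((a:ℝ) - (G p q m : ℝ) * gam p q ^ (-(k:ℤ)))/(G p q m : ℝ) := by
    intro a; field_simp
  constructor
  · rw [hdiv, abs_div, abs_of_pos hGm]
    have h1 : |(G p q (m-k):ℝ) - (G p q m : ℝ) * gam p q ^ (-(k:ℤ))| < 1 :=
      lt_trans hkey (by norm_num)
    have h2 : |(G p q (m-k):ℝ) - (G p q m : ℝ) * gam p q ^ (-(k:ℤ))| / (G p q m : ℝ)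
        < 1 / (G p q m : ℝ) := by gcongr
    exact h2
  · intro i hi
    rw [hdiv, hdiv, abs_div, abs_div, abs_of_pos hGm]
    have hmain : |(G p q (m-k):ℝ) - (G p q m : ℝ) * gam p q ^ (-(k:ℤ))| ≤
        |(G p q (m-i):ℝ) - (G p q m : ℝ) * gam p q ^ (-(k:ℤ))| := by
      rcases lt_trichotomy i k with hik | hik | hik
      · have hlt : m - k < m - i := by omega
        have hG : G p q (m-k) + 1 ≤ G p q (m-i) := G_mono p q hq hpq hlt
        have hGr : (G p q (m-k) : ℝ) + 1 ≤ (G p q (m-i) : ℝ) := by exact_mod_cast hG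
        have h1 := (abs_lt.mp hkey).1
        have h2 := le_abs_self ((G p q (m-i):ℝ) - (G p q m : ℝ) * gam p q ^ (-(k:ℤ)))
        linarith [le_of_lt hkey]
      · subst hik; exact le_refl _
      · have hlt : m - i < m - k := by omega
        have hG : G p q (m-i) + 1 ≤ G p q (m-k) := G_mono p q hq hpq hlt
        have hGr : (G p q (m-i) : ℝ) + 1 ≤ (G p q (m-k) : ℝ) := by exact_mod_cast hG
        have h1 := (abs_lt.mp hkey).2
        have h2 := neg_abs_le ((G p q (m-i):ℝ) - (G p q m : ℝ) * gam p q ^ (-(k:ℤ)))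
        linarith [le_of_lt hkey]
    gcongr
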